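/- The function u ↦ 4u²/(u²−1) + (2u/3) log((u−1)(u−2)/((u+1)(u+2))) is nonpositive for all u > 2. -/

import Mathlib

open Real

lemma key_artanh (t : ℝ) (h0 : 0 ≤ t) (h1 : t < 1) :
    2*t + 2*t^3/3 + 2*t^5/5 ≤ Real.log (1+t) - Real.log (1-t) := by
  set f : ℝ → ℝ := fun x => Real.log (1+x) - Real.log (1-x) - (2*x + 2*x^3/3 + 2*x^5/5) with hf
  have hder : ∀ x ∈ Set.Ico (0:ℝ) 1, HasDerivAt f (2*x^6/((1+x)*(1-x))) x := by
    intro x hx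
    obtain ⟨hx0, hx1⟩ := hx
    have hp1 : (0:ℝ) < 1 + x := by linarith
    have hp2 : (0:ℝ) < 1 - x := by linarith
    have d1 : HasDerivAt (fun y : ℝ => 1 + y) 1 x := (hasDerivAt_id x).const_add 1
    have d2 : HasDerivAt (fun y : ℝ => 1 - y) (-1) x := (hasDerivAt_id x).const_sub 1
    have l1 := d1.log (ne_of_gt hp1)
    have l2 := d2.log (ne_of_gt hp2)
    have h3 := (hasDerivAt_pow 3 x).const_mul (2:ℝ)
    have h5 := (hasDerivAt_pow 5 x).const_mul (2:ℝ)
    have hp : HasDerivAt (fun y : ℝ => 2*y + 2*y^3/3 + 2*y^5/5)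
        (2 + 2*x^2 + 2*x^4) x := by
      have := (((hasDerivAt_id x).const_mul (2:ℝ)).add (h3.div_const 3)).add (h5.div_const 5)
      refine this.congr_deriv ?_
      push_cast
      ring
    have := (l1.sub l2).sub hp
    refine this.congr_deriv ?_
    field_simp
    ring
  have hmono : MonotoneOn f (Set.Ico (0:ℝ) 1) := by
    apply monotoneOn_of_deriv_nonneg (convex_Ico 0 1)
    · intro x hx
      exact (hder x hx).differentiableAt.continuousAt.continuousWithinAt
    · intro x hx
      rw [interior_Ico] at hx
      exact ((hder x ⟨le_of_lt hx.1, hx.2⟩).differentiableAt).differentiableWithinAt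
    · intro x hx
      rw [interior_Ico] at hx
      rw [(hder x ⟨le_of_lt hx.1, hx.2⟩).deriv]
      have hp1 : (0:ℝ) < 1 + x := by linarith [hx.1]
      have hp2 : (0:ℝ) < 1 - x := by linarith [hx.2]
      positivity
  have h00 : f 0 = 0 := by simp [hf]
  have := hmono (Set.mem_Ico.mpr ⟨le_refl 0, by norm_num⟩) (Set.mem_Ico.mpr ⟨h0, h1⟩) h0
  rw [h00] at this
  simp only [hf] at this
  linarith

theorem stmt14 :
    ∀ u : ℝ, 2 < u →
      4 * u ^ 2 / (u ^ 2 - 1) +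
        (2 * u / 3) * Real.log (((u - 1) * (u - 2)) / ((u + 1) * (u + 2))) ≤ 0 := by
  intro u hu
  have hu0 : (0:ℝ) < u := by linarith
  have ht1 : (0:ℝ) ≤ 1/u := by positivity
  have ht1' : 1/u < 1 := by rw [div_lt_one hu0]; linarith
  have ht2 : (0:ℝ) ≤ 2/u := by positivity
  have ht2' : 2/u < 1 := by rw [div_lt_one hu0]; linarith
  have k1 := key_artanh (1/u) ht1 ht1'
  have k2 := key_artanh (2/u) ht2 ht2'
  have e1 : (1:ℝ) + 1/u = (u+1)/u := by field_simp
  have e2 : (1:ℝ) - 1/u = (u-1)/u := by field_simp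
  have e3 : (1:ℝ) + 2/u = (u+2)/u := by field_simp
  have e4 : (1:ℝ) - 2/u = (u-2)/u := by field_simp
  have hm1 : (0:ℝ) < u - 1 := by linarith
  have hm2 : (0:ℝ) < u - 2 := by linarith
  have hp1 : (0:ℝ) < u + 1 := by linarith
  have hp2 : (0:ℝ) < u + 2 := by linarith
  have hL : Real.log (((u - 1) * (u - 2)) / ((u + 1) * (u + 2)))
      = (Real.log (1-1/u) - Real.log (1+1/u)) + (Real.log (1-2/u) - Real.log (1+2/u)) := by
    rw [e1, e2, e3, e4]
    rw [Real.log_div (by positivity) (by positivity),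
        Real.log_mul (by positivity) (by positivity),
        Real.log_mul (by positivity) (by positivity),
        Real.log_div (by positivity) (by positivity),
        Real.log_div (by positivity) (by positivity),
        Real.log_div (by positivity) (by positivity),
        Real.log_div (by positivity) (by positivity)]
    ring
  have hLb : Real.log (((u - 1) * (u - 2)) / ((u + 1) * (u + 2)))
      ≤ -((2*(1/u) + 2*(1/u)^3/3 + 2*(1/u)^5/5) + (2*(2/u) + 2*(2/u)^3/3 + 2*(2/u)^5/5)) := by
    rw [hL]; linarith
  have hcoef : (0:ℝ) < 2*u/3 := by positivity
  have hmul := mul_le_mul_of_nonneg_left hLb (le_of_lt hcoef)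
  have hfinal : 4 * u ^ 2 / (u ^ 2 - 1) +
      (2*u/3) * (-((2*(1/u) + 2*(1/u)^3/3 + 2*(1/u)^5/5) + (2*(2/u) + 2*(2/u)^3/3 + 2*(2/u)^5/5))) ≤ 0 := by
    have hd : (0:ℝ) < u^2 - 1 := by nlinarith
    have heq : 4 * u ^ 2 / (u ^ 2 - 1) +
        (2*u/3) * (-((2*(1/u) + 2*(1/u)^3/3 + 2*(1/u)^5/5) + (2*(2/u) + 2*(2/u)^3/3 + 2*(2/u)^5/5)))
        = -((24*u^2 - 44)/(5*u^4*(u^2-1))) := by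
      field_simp
      ring
    rw [heq]
    have : (0:ℝ) < 24*u^2 - 44 := by nlinarith
    have : (0:ℝ) < 5*u^4*(u^2-1) := by positivity
    rw [neg_nonpos]
    positivity
  linarith
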